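/- For all real t with 0 < t ≤ 1/2, one has |ζ(1+it) − 1/(it)| < 0.951. (This bound is unconditional.) -/

import Mathlib

open Complex

namespace ZetaNearOne

open intervalIntegral


noncomputable def zb (n : ℕ) (s : ℂ) : ℂ :=
  (n : ℂ) ^ (-s) - (((n : ℂ) + 1) ^ (1 - s) - (n : ℂ) ^ (1 - s)) / (1 - s)

lemma zb_eq_integral {n : ℕ} (hn : 1 ≤ n) {s : ℂ} (hs : s ≠ 1) :
    zb n s = ∫ x : ℝ in (n : ℝ)..(n + 1 : ℝ), ((n : ℂ) ^ (-s) - (x : ℂ) ^ (-s)) := by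
  have h0 : (0 : ℝ) ∉ Set.uIcc (n : ℝ) ((n : ℝ) + 1) := by
    rw [Set.uIcc_of_le (by linarith)]
    rintro ⟨h1, h2⟩
    have : (1 : ℝ) ≤ (n : ℝ) := by exact_mod_cast hn
    linarith
  have hr : (-s) ≠ -1 := fun h => hs (neg_inj.mp h)
  rw [intervalIntegral.integral_sub intervalIntegrable_const
      (intervalIntegrable_cpow (Or.inr h0)),
    intervalIntegral.integral_const, integral_cpow (Or.inr ⟨hr, h0⟩)]
  have : (-s) + 1 = 1 - s := by ring
  rw [this]
  push_cast
  rw [zb]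
  have h1 : ((n : ℝ) + 1 - n) = (1:ℝ) := by ring
  rw [h1, one_smul]


lemma ptbound {n : ℕ} (hn : 1 ≤ n) {s : ℂ} (hre : 1 ≤ s.re) {x : ℝ}
    (hx1 : (n : ℝ) ≤ x) :
    ‖(n : ℂ) ^ (-s) - (x : ℂ) ^ (-s)‖ ≤ ‖s‖ * (x - n) / (n : ℝ) ^ 2 := by
  have hn0 : (0 : ℝ) < n := by exact_mod_cast Nat.lt_of_lt_of_le Nat.zero_lt_one hn
  have hn1 : (1 : ℝ) ≤ n := by exact_mod_cast hn
  have hs0 : s ≠ 0 := by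
    intro h; rw [h] at hre; simp at hre; linarith
  have h0 : (0 : ℝ) ∉ Set.uIcc (n : ℝ) x := by
    rw [Set.uIcc_of_le hx1]; rintro ⟨h1, h2⟩; linarith
  have hr : (-s - 1) ≠ -1 := by
    intro h; exact hs0 (by linear_combination -h)
  have key : (n : ℂ) ^ (-s) - (x : ℂ) ^ (-s) = s * ∫ u : ℝ in (n : ℝ)..x, (u : ℂ) ^ (-s - 1) := by
    rw [integral_cpow (Or.inr ⟨hr, h0⟩)]
    have : (-s - 1) + 1 = -s := by ring
    rw [this]
    field_simp [hs0]
    push_cast; ring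
  rw [key, norm_mul]
  rw [mul_div_assoc]
  gcongr
  calc ‖∫ u : ℝ in (n : ℝ)..x, (u : ℂ) ^ (-s - 1)‖
      ≤ ((n : ℝ) ^ 2)⁻¹ * |x - (n : ℝ)| := by
        apply intervalIntegral.norm_integral_le_of_norm_le_const
        intro u hu
        rw [Set.uIoc_of_le hx1] at hu
        have hu0 : (0 : ℝ) < u := lt_of_lt_of_le hn0 hu.1.le
        rw [Complex.norm_cpow_eq_rpow_re_of_pos hu0]
        have h1 : (-s - 1).re = -(s.re + 1) := by simp; ring
        rw [h1, Real.rpow_neg hu0.le]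
        rw [inv_le_inv₀ (by positivity) (by positivity)]
        calc ((n : ℝ) ^ 2) = (n : ℝ) ^ (2 : ℝ) := by rw [← Real.rpow_natCast]; norm_num
          _ ≤ (n : ℝ) ^ (s.re + 1) := Real.rpow_le_rpow_of_exponent_le hn1 (by linarith)
          _ ≤ u ^ (s.re + 1) := Real.rpow_le_rpow hn0.le hu.1.le (by linarith)
    _ = (x - n) / (n : ℝ) ^ 2 := by
        rw [_root_.abs_of_nonneg (by linarith : (0:ℝ) ≤ x - n)]; ring

theorem zb_norm_le {n : ℕ} (hn : 1 ≤ n) {s : ℂ} (hre : 1 ≤ s.re) (hs : s ≠ 1) :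
    ‖zb n s‖ ≤ ‖s‖ / (2 * (n : ℝ) ^ 2) := by
  have hn0 : (0 : ℝ) < n := by exact_mod_cast Nat.lt_of_lt_of_le Nat.zero_lt_one hn
  rw [zb_eq_integral hn hs]
  have hInt : IntervalIntegrable (fun x : ℝ => ‖s‖ * (x - n) / (n : ℝ) ^ 2) MeasureTheory.volume
      (n : ℝ) ((n : ℝ) + 1) := by
    apply Continuous.intervalIntegrable; fun_prop
  calc ‖∫ x : ℝ in (n : ℝ)..(n + 1 : ℝ), ((n : ℂ) ^ (-s) - (x : ℂ) ^ (-s))‖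
      ≤ |∫ x : ℝ in (n : ℝ)..(n + 1 : ℝ), ‖s‖ * (x - n) / (n : ℝ) ^ 2| := by
        apply intervalIntegral.norm_integral_le_abs_of_norm_le _ hInt
        rw [MeasureTheory.ae_restrict_iff' measurableSet_uIoc]
        filter_upwards with x hx
        rw [Set.uIoc_of_le (by linarith)] at hx
        exact ptbound hn hre hx.1.le
    _ = ‖s‖ / (2 * (n : ℝ) ^ 2) := by
        have : (∫ x : ℝ in (n : ℝ)..(n + 1 : ℝ), ‖s‖ * (x - n) / (n : ℝ) ^ 2)
            = (‖s‖ / (n : ℝ) ^ 2) * ∫ x : ℝ in (n : ℝ)..(n + 1 : ℝ), (x - n) := by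
          rw [← intervalIntegral.integral_const_mul]
          congr 1 with x
          ring
        rw [this, intervalIntegral.integral_sub (Continuous.intervalIntegrable (by fun_prop) _ _)
          intervalIntegrable_const, integral_id, intervalIntegral.integral_const, smul_eq_mul]
        rw [show ((((n:ℝ)+1)^2 - (n:ℝ)^2)/2) - ((n:ℝ)+1 - (n:ℝ)) * (n:ℝ) = 1/2 by ring]
        rw [_root_.abs_of_nonneg (by positivity)]
        ring

theorem zb_summable {s : ℂ} (hre : 1 ≤ s.re) (hs : s ≠ 1) :
    Summable (fun n : ℕ => zb (n + 1) s) := by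
  have S1 : Summable (fun n : ℕ => ‖s‖ / (2 * ((n : ℝ) + 1) ^ 2)) := by
    have : Summable (fun n : ℕ => 1 / ((n : ℝ) + 1) ^ 2) := by
      have := (summable_nat_add_iff (f := fun n : ℕ => 1 / (n : ℝ) ^ 2) 1).mpr
        (Real.summable_one_div_nat_pow.mpr one_lt_two)
      convert this using 2 with n
      · rfl
      push_cast; ring
    simpa [div_eq_mul_inv, mul_comm, mul_assoc, mul_left_comm] using this.mul_left (‖s‖ / 2)
  apply Summable.of_norm_bounded S1
  intro n
  have := zb_norm_le (n := n + 1) (by omega) hre hs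
  convert this using 2
  push_cast; ring

theorem zb_hasSum {s : ℂ} (hs : 1 < s.re) :
    HasSum (fun n : ℕ => zb (n + 1) s) (riemannZeta s - 1 / (s - 1)) := by
  have hs1 : s ≠ 1 := by intro h; rw [h] at hs; simp at hs
  have hs1' : (1 : ℂ) - s ≠ 0 := by
    intro h; exact hs1 (by linear_combination -h)
  have hsum := zb_summable hs.le hs1
  -- the zeta series
  have hζs : Summable (fun n : ℕ => ((n : ℂ) + 1) ^ (-s)) := by
    have := (summable_nat_add_iff (f := fun n : ℕ => 1 / (n : ℂ) ^ s) 1).mpr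
      (Complex.summable_one_div_nat_cpow.mpr hs)
    apply this.congr
    intro n
    push_cast
    rw [cpow_neg, one_div]
  have hζ : HasSum (fun n : ℕ => ((n : ℂ) + 1) ^ (-s)) (riemannZeta s) := by
    have h1 := zeta_eq_tsum_one_div_nat_add_one_cpow hs
    have h2 : riemannZeta s = ∑' n : ℕ, ((n : ℂ) + 1) ^ (-s) := by
      rw [h1]; congr 1 with n; push_cast; rw [cpow_neg, one_div]
    rw [h2]; exact hζs.hasSum
  -- partial sums
  have hpart : ∀ N : ℕ, (∑ n ∈ Finset.range N, zb (n + 1) s)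
      = (∑ n ∈ Finset.range N, ((n : ℂ) + 1) ^ (-s))
        - ((((N : ℂ) + 1) ^ (1 - s) - 1) / (1 - s)) := by
    intro N
    set f : ℕ → ℂ := fun k => ((k : ℂ) + 1) ^ (1 - s) / (1 - s) with hf
    have tele : (∑ n ∈ Finset.range N, (f (n + 1) - f n)) = f N - f 0 :=
      Finset.sum_range_sub f N
    calc (∑ n ∈ Finset.range N, zb (n + 1) s)
        = ∑ n ∈ Finset.range N, (((n : ℂ) + 1) ^ (-s) - (f (n + 1) - f n)) := by
          apply Finset.sum_congr rfl
          intro n _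
          rw [zb]
          simp only [hf]
          push_cast
          ring
      _ = (∑ n ∈ Finset.range N, ((n : ℂ) + 1) ^ (-s))
            - ((((N : ℂ) + 1) ^ (1 - s) - 1) / (1 - s)) := by
          rw [Finset.sum_sub_distrib, tele]
          simp only [hf]
          rw [Nat.cast_zero, show ((0 : ℂ) + 1) = 1 by ring, one_cpow]
          ring
  -- limits
  have hlim1 : Filter.Tendsto (fun N : ℕ => (((N : ℂ) + 1) ^ (1 - s))) Filter.atTop (nhds 0) := by
    rw [tendsto_zero_iff_norm_tendsto_zero]
    have heq : ∀ N : ℕ, ‖(((N : ℂ) + 1) ^ (1 - s))‖ = ((N : ℝ) + 1) ^ (1 - s.re) := by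
      intro N
      rw [show ((N : ℂ) + 1) = (((N : ℝ) + 1 : ℝ) : ℂ) by push_cast; ring,
        Complex.norm_cpow_eq_rpow_re_of_pos (by positivity)]
      congr 1
    simp_rw [heq]
    have h1 : Filter.Tendsto (fun x : ℝ => x ^ (-(s.re - 1))) Filter.atTop (nhds 0) :=
      tendsto_rpow_neg_atTop (by linarith)
    have h2 : Filter.Tendsto (fun N : ℕ => (N : ℝ) + 1) Filter.atTop Filter.atTop :=
      Filter.tendsto_atTop_add_const_right _ _ tendsto_natCast_atTop_atTop
    have h3 := h1.comp h2
    rw [show (-(s.re - 1)) = 1 - s.re by ring] at h3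
    exact h3
  have hlim : Filter.Tendsto (fun N : ℕ => ∑ n ∈ Finset.range N, zb (n + 1) s)
      Filter.atTop (nhds (riemannZeta s - 1 / (s - 1))) := by
    simp_rw [hpart]
    have h2 : Filter.Tendsto (fun N : ℕ => ((((N : ℂ) + 1) ^ (1 - s) - 1) / (1 - s)))
        Filter.atTop (nhds ((0 - 1) / (1 - s))) :=
      ((hlim1.sub_const 1).div_const _)
    have h3 := hζ.tendsto_sum_nat.sub h2
    have hs2 : s - 1 ≠ 0 := sub_ne_zero.mpr hs1
    have hkey : (1 : ℂ) / (s - 1) = (0 - 1) / (1 - s) := by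
      rw [div_eq_div_iff hs2 hs1']; ring
    rw [show riemannZeta s - 1 / (s - 1) = riemannZeta s - (0 - 1) / (1 - s) from by rw [hkey]]
    exact h3
  have := hsum.hasSum.tendsto_sum_nat
  have hval := tendsto_nhds_unique this hlim
  rw [← hval]
  exact hsum.hasSum

noncomputable def SS : Set ℂ := {s : ℂ | 1 ≤ s.re ∧ ‖s‖ ≤ 3 ∧ s ≠ 1}

theorem summable_u : Summable (fun n : ℕ => 3 / (2 * ((n : ℝ) + 1) ^ 2)) := by
  have h0 : Summable (fun n : ℕ => 1 / ((n : ℝ) + 1) ^ 2) := by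
    have := (summable_nat_add_iff (f := fun n : ℕ => 1 / (n : ℝ) ^ 2) 1).mpr
      (Real.summable_one_div_nat_pow.mpr one_lt_two)
    apply this.congr
    intro n
    push_cast
    ring
  have := h0.mul_left (3 / 2)
  apply this.congr
  intro n
  field_simp

theorem zbF_continuousOn : ContinuousOn (fun s : ℂ => ∑' n : ℕ, zb (n + 1) s) SS := by
  refine continuousOn_tsum (fun n => ?_) summable_u (fun n s hs => ?_)
  · 
    have hb : ((n : ℂ) + 1) ≠ 0 := by
      intro h
      have := congrArg Complex.re h
      push_cast at this
      simp at this
      linarith [Nat.cast_nonneg (α := ℝ) n]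
    have hb2 : ((n : ℂ) + 1 + 1) ≠ 0 := by
      intro h
      have := congrArg Complex.re h
      push_cast at this
      simp at this
      linarith [Nat.cast_nonneg (α := ℝ) n]
    have heq : ∀ s : ℂ, zb (n + 1) s =
        ((n : ℂ) + 1) ^ (-s) - (((n : ℂ) + 1 + 1) ^ (1 - s) - ((n : ℂ) + 1) ^ (1 - s)) / (1 - s) := by
      intro s; rw [zb]; push_cast; ring_nf
    show ContinuousOn (fun s : ℂ => zb (n + 1) s) SS
    simp_rw [heq]
    apply ContinuousOn.sub
    · exact (Continuous.const_cpow continuous_neg (Or.inl hb)).continuousOn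
    · apply ContinuousOn.div
      · apply ContinuousOn.sub
        · exact (Continuous.const_cpow (continuous_const.sub continuous_id) (Or.inl hb2)).continuousOn
        · exact (Continuous.const_cpow (continuous_const.sub continuous_id) (Or.inl hb)).continuousOn
      · exact (continuous_const.sub continuous_id).continuousOn
      · intro s hs
        exact sub_ne_zero.mpr (Ne.symm hs.2.2)
  · obtain ⟨h1, h2, h3⟩ := hs
    calc ‖zb (n + 1) s‖ ≤ ‖s‖ / (2 * ((n + 1 : ℕ) : ℝ) ^ 2) := zb_norm_le (by omega) h1 h3
      _ ≤ 3 / (2 * ((n : ℝ) + 1) ^ 2) := by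
          push_cast
          gcongr

end ZetaNearOne

open ZetaNearOne in
/-- For `0 < t ≤ 1/2` we have the unconditional bound `|ζ(1+it) − 1/(it)| < 0.951`. -/
theorem zeta_near_one_bound (t : ℝ) (ht0 : 0 < t) (ht1 : t ≤ 1 / 2) :
    ‖riemannZeta (1 + t * I) - 1 / (I * t)‖ < 0.951 := by
  set p : ℂ := 1 + t * I with hp
  have hpre : p.re = 1 := by simp [hp]
  have hpim : p.im = t := by simp [hp]
  have hp1 : p ≠ 1 := by
    intro h
    have h2 := congrArg Complex.im h
    rw [hpim] at h2
    simp at h2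
    exact ht0.ne' h2
  have hpabs : ‖p‖ ≤ 3 := by
    calc ‖p‖ ≤ ‖(1 : ℂ)‖ + ‖((t : ℂ) * I)‖ := by
          apply norm_add_le
      _ = 1 + t := by
          simp [Complex.norm_real, abs_of_pos ht0]
      _ ≤ 3 := by linarith
  have hpS : p ∈ SS := ⟨le_of_eq hpre.symm, hpabs, hp1⟩
  -- identify the tsum with ζ p - 1/(p-1)
  have hFp : (∑' n : ℕ, zb (n + 1) p) = riemannZeta p - 1 / (p - 1) := by
    set x : ℕ → ℂ := fun k => p + ((1 / ((k : ℝ) + 1) : ℝ) : ℂ) with hx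
    have hx_tendsto : Filter.Tendsto x Filter.atTop (nhds p) := by
      have h0 : Filter.Tendsto (fun k : ℕ => ((1 / ((k : ℝ) + 1) : ℝ) : ℂ))
          Filter.atTop (nhds 0) := by
        rw [show ((0 : ℂ)) = ((0 : ℝ) : ℂ) from by norm_num]
        exact Filter.Tendsto.comp (Complex.continuous_ofReal.tendsto 0)
          tendsto_one_div_add_atTop_nhds_zero_nat
      have h2 := Filter.Tendsto.add (tendsto_const_nhds (x := p)) h0
      rw [add_zero] at h2
      exact h2
    have hxre : ∀ k : ℕ, 1 < (x k).re := by
      intro k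
      simp only [hx, Complex.add_re, Complex.ofReal_re, hpre]
      have : (0 : ℝ) < 1 / ((k : ℝ) + 1) := by positivity
      linarith
    have hxS : ∀ k : ℕ, x k ∈ SS := by
      intro k
      refine ⟨(hxre k).le, ?_, ?_⟩
      · calc ‖x k‖ ≤ ‖p‖ + ‖(((1 / ((k : ℝ) + 1) : ℝ) : ℂ))‖ :=
              norm_add_le _ _
          _ ≤ 3 := by
              rw [Complex.norm_real, Real.norm_eq_abs]
              have h1 : |1 / ((k : ℝ) + 1)| ≤ 1 := by
                rw [abs_of_pos (by positivity)]
                rw [div_le_one (by positivity)]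
                linarith [Nat.cast_nonneg (α := ℝ) k]
              have h2 : ‖p‖ ≤ 2 := by
                calc ‖p‖ ≤ ‖(1 : ℂ)‖ + ‖((t : ℂ) * I)‖ :=
                      norm_add_le _ _
                  _ = 1 + t := by simp [Complex.norm_real, abs_of_pos ht0]
                  _ ≤ 2 := by linarith
              linarith
      · intro h
        have := congrArg Complex.re h
        rw [Complex.one_re] at this
        have := hxre k
        rw [h] at this
        simp at this
    have h1 : Filter.Tendsto (fun k : ℕ => ∑' n : ℕ, zb (n + 1) (x k)) Filter.atTop
        (nhds (∑' n : ℕ, zb (n + 1) p)) := by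
      have hW : ContinuousWithinAt (fun s : ℂ => ∑' n : ℕ, zb (n + 1) s) SS p :=
        zbF_continuousOn p hpS
      exact hW.tendsto.comp (tendsto_nhdsWithin_of_tendsto_nhds_of_eventually_within x
        hx_tendsto (Filter.Eventually.of_forall hxS))
    have h2 : Filter.Tendsto (fun k : ℕ => riemannZeta (x k) - 1 / (x k - 1)) Filter.atTop
        (nhds (riemannZeta p - 1 / (p - 1))) := by
      apply Filter.Tendsto.sub
      · exact ((differentiableAt_riemannZeta hp1).continuousAt.tendsto).comp hx_tendsto
      · have hc : ContinuousAt (fun s : ℂ => 1 / (s - 1)) p := by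
          apply ContinuousAt.div continuousAt_const (continuousAt_id.sub continuousAt_const)
          exact sub_ne_zero.mpr hp1
        exact hc.tendsto.comp hx_tendsto
    have heq : ∀ k : ℕ, (∑' n : ℕ, zb (n + 1) (x k)) = riemannZeta (x k) - 1 / (x k - 1) :=
      fun k => (zb_hasSum (hxre k)).tsum_eq
    have h1' : Filter.Tendsto (fun k : ℕ => riemannZeta (x k) - 1 / (x k - 1)) Filter.atTop
        (nhds (∑' n : ℕ, zb (n + 1) p)) := by
      apply h1.congr
      intro k
      exact heq k
    exact tendsto_nhds_unique h1' h2
  -- basel-type sum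
  have h0 : HasSum (fun n : ℕ => 1 / ((n : ℝ) + 1) ^ 2) (Real.pi ^ 2 / 6) := by
    have hzeta2 := hasSum_zeta_two
    have h1 : HasSum (fun n : ℕ => 1 / (((n + 1 : ℕ)) : ℝ) ^ 2) (Real.pi ^ 2 / 6) := by
      rw [hasSum_nat_add_iff (f := fun n : ℕ => 1 / (n : ℝ) ^ 2) 1]
      simpa using hzeta2
    apply h1.congr_fun
    intro n
    push_cast
    ring
  -- norm bound
  have hub : ∀ n : ℕ, ‖zb (n + 1) p‖ ≤ ‖p‖ / 2 * (1 / ((n : ℝ) + 1) ^ 2) := by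
    intro n
    have := zb_norm_le (n := n + 1) (by omega) (le_of_eq hpre.symm) hp1
    calc ‖zb (n + 1) p‖ ≤ ‖p‖ / (2 * ((n + 1 : ℕ) : ℝ) ^ 2) := this
      _ = ‖p‖ / 2 * (1 / ((n : ℝ) + 1) ^ 2) := by push_cast; rw [mul_one_div, div_div]
  have hnorm : ‖∑' n : ℕ, zb (n + 1) p‖ ≤ ‖p‖ / 2 * (Real.pi ^ 2 / 6) :=
    tsum_of_norm_bounded (h0.mul_left (‖p‖ / 2)) hub
  -- final numeric
  have hp_eq : riemannZeta (1 + t * I) - 1 / (I * t) = riemannZeta p - 1 / (p - 1) := by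
    rw [hp]
    congr 2
    · push_cast
      ring
  rw [hp_eq, ← hFp]
  have habs2 : (‖p‖) ^ 2 = 1 + t ^ 2 := by
    rw [Complex.sq_norm, Complex.normSq_apply, hpre, hpim]
    ring
  have hA := norm_nonneg p
  calc ‖∑' n : ℕ, zb (n + 1) p‖ ≤ ‖p‖ / 2 * (Real.pi ^ 2 / 6) := hnorm
    _ < 0.951 := by
      nlinarith [Real.pi_lt_d2, Real.pi_gt_three, sq_nonneg (‖p‖ - 9/8),
        sq_nonneg (Real.pi - 3.15), ht0, ht1, habs2, hA, sq_nonneg t]
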